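/- arXiv:1012.4245 — 2 statements merged into one kernel-verified Lean document; each statement's English description precedes it below -/
import Mathlib

section
/- For every q with 0 < q < 1, every x ∈ [0,1), every integer n ≥ 1 and every integer k with 0 ≤ k ≤ n: |b_{nk}(q;x) − b_{∞k}(q;x)| ≤ b_{nk}(q;x) · (x/(1−x)) · q^n/(1−q) + b_{∞k}(q;x) · q^{n−k+1}/(1−q). -/
open Finset Filter

noncomputable section

/-- The q-integer `[n]_q = 1 + q + ⋯ + q^(n-1)`. -/
def qInt (q : ℝ) (n : ℕ) : ℝ := ∑ i ∈ Finset.range n, q ^ i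

/-- The q-factorial `[n]_q!`. -/
def qFact (q : ℝ) : ℕ → ℝ
  | 0 => 1
  | n + 1 => qFact q n * qInt q (n + 1)

/-- The q-binomial coefficient `[n k]_q`. -/
def qBinom (q : ℝ) (n k : ℕ) : ℝ := qFact q n / (qFact q k * qFact q (n - k))

/-- The Lupaş basis function `b_{nk}(q;x)`. -/
def lupasB (q : ℝ) (n k : ℕ) (x : ℝ) : ℝ :=
  qBinom q n k * q ^ (k * (k - 1) / 2) * x ^ k * (1 - x) ^ (n - k) /
    ∏ j ∈ Finset.range (n - 1), (1 - x + q ^ (j + 1) * x)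

/-- The limit Lupaş basis function `b_{∞k}(q;x)` (for `0 < q < 1`, `x ∈ [0,1)`). -/
def lupasBInf (q : ℝ) (k : ℕ) (x : ℝ) : ℝ :=
  q ^ (k * (k - 1) / 2) * (x / (1 - x)) ^ k /
    ((1 - q) ^ k * qFact q k * ∏' j : ℕ, (1 + q ^ j * (x / (1 - x))))

/-- The Lupaş q-analogue of the Bernstein operator `R_{n,q}(f,x)`. -/
def lupasR (q : ℝ) (n : ℕ) (f : ℝ → ℝ) (x : ℝ) : ℝ :=
  ∑ k ∈ Finset.range (n + 1), f (qInt q k / qInt q n) * lupasB q n k x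

/-- The limit q-Lupaş operator `R_{∞,q}(f,x)` for `0 < q < 1`. -/
def lupasRInfLow (q : ℝ) (f : ℝ → ℝ) (x : ℝ) : ℝ :=
  if x = 1 then f 1 else ∑' k : ℕ, f (1 - q ^ k) * lupasBInf q k x

/-- The limit q-Lupaş operator `R_{∞,q}(f,x)`: for `q > 1` it is defined by
reflection, `R_{∞,q}(f,x) = R_{∞,1/q}(g,1-x)` with `g(x) = f(1-x)`. -/
def lupasRInf (q : ℝ) (f : ℝ → ℝ) (x : ℝ) : ℝ :=
  if 1 < q then lupasRInfLow (1 / q) (fun t => f (1 - t)) (1 - x)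
  else lupasRInfLow q f x

/-- The transform `v(q,x) = qx/(1-x+qx)`. -/
def vq (q x : ℝ) : ℝ := q * x / (1 - x + q * x)

/-- `L_{n,q}(f,x) = R_{n,q}(f,x) - R_{∞,q}(f,x)`. -/
def lupasL (q : ℝ) (n : ℕ) (f : ℝ → ℝ) (x : ℝ) : ℝ :=
  lupasR q n f x - lupasRInf q f x

/-- The modulus of continuity `ω(f,t)` of `f` on `[0,1]`. -/
def omega1 (f : ℝ → ℝ) (t : ℝ) : ℝ :=
  sSup {d | ∃ x ∈ Set.Icc (0:ℝ) 1, ∃ y ∈ Set.Icc (0:ℝ) 1, |x - y| ≤ t ∧ d = |f x - f y|}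

/-- The second modulus of smoothness `ω₂(f,t)` of `f` on `[0,1]`. -/
def omega2 (f : ℝ → ℝ) (t : ℝ) : ℝ :=
  sSup {d | ∃ h, 0 ≤ h ∧ h ≤ t ∧ ∃ x, 0 ≤ x ∧ x ≤ 1 - 2 * h ∧
    d = |f (x + 2 * h) - 2 * f (x + h) + f x|}

lemma geomSum_le' (q : ℝ) (hq0 : 0 < q) (hq1 : q < 1) (m : ℕ) :
    ∑ j ∈ Finset.range m, q ^ j ≤ 1 / (1 - q) := by
  have h1 : (0:ℝ) < 1 - q := by linarith
  have h2 : ∑ j ∈ Finset.range m, q ^ j = (1 - q ^ m) / (1 - q) := by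
    rw [geom_sum_eq (by linarith : q ≠ 1), div_eq_div_iff (by linarith) h1.ne']
    ring
  rw [h2, div_le_div_iff₀ h1 h1]
  nlinarith [pow_nonneg hq0.le m]


lemma one_le_prod_real {m : ℕ} {f : ℕ → ℝ} (hf : ∀ j, 1 ≤ f j) :
    1 ≤ ∏ j ∈ Finset.range m, f j := by
  calc (1:ℝ) = ∏ _j ∈ Finset.range m, 1 := by simp
    _ ≤ ∏ j ∈ Finset.range m, f j :=
      Finset.prod_le_prod (fun j _ => zero_le_one) (fun j _ => hf j)

lemma mult_aux (q c : ℝ) (hq0 : 0 < q) (hq1 : q < 1) (hc : 0 ≤ c) :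
    Multipliable (fun j : ℕ => 1 + q ^ j * c) := by
  have hpos : ∀ j : ℕ, (0:ℝ) < 1 + q ^ j * c := fun j => by positivity
  refine Real.multipliable_of_summable_log (fun j => hpos j) ?_
  refine Summable.of_nonneg_of_le (fun j => Real.log_nonneg ?_) (fun j => ?_)
    ((summable_geometric_of_lt_one hq0.le hq1).mul_right c)
  · show (1:ℝ) ≤ 1 + q ^ j * c
    nlinarith [pow_nonneg hq0.le j]
  · show Real.log (1 + q ^ j * c) ≤ q ^ j * c
    have := Real.log_le_sub_one_of_pos (hpos j)
    linarith

lemma oneLeTprodAux (q c : ℝ) (hq0 : 0 < q) (hq1 : q < 1) (hc : 0 ≤ c) :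
    1 ≤ ∏' j : ℕ, (1 + q ^ j * c) := by
  refine ge_of_tendsto' (mult_aux q c hq0 hq1 hc).hasProd.tendsto_prod_nat (fun m => ?_)
  exact one_le_prod_real (fun j => by nlinarith [pow_nonneg hq0.le j])

lemma tprod_split (q c : ℝ) (hq0 : 0 < q) (hq1 : q < 1) (hc : 0 ≤ c) (n : ℕ) :
    ∏' j : ℕ, (1 + q ^ j * c) =
      (∏ j ∈ Finset.range n, (1 + q ^ j * c)) *
        ∏' j : ℕ, (1 + q ^ j * (q ^ n * c)) := by
  have h1 := (mult_aux q c hq0 hq1 hc).hasProd.tendsto_prod_nat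
  have h2 := (mult_aux q (q ^ n * c) hq0 hq1 (by positivity)).hasProd.tendsto_prod_nat
  have key : ∀ m : ℕ, ∏ j ∈ Finset.range (m + n), (1 + q ^ j * c) =
      (∏ j ∈ Finset.range n, (1 + q ^ j * c)) *
        ∏ j ∈ Finset.range m, (1 + q ^ j * (q ^ n * c)) := by
    intro m
    rw [add_comm, Finset.prod_range_add]
    congr 1
    exact Finset.prod_congr rfl (fun i _ => by rw [pow_add]; ring)
  exact tendsto_nhds_unique ((h1.comp (tendsto_add_atTop_nat n)).congr key)
    (tendsto_const_nhds.mul h2)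

lemma prod_sub_one_le (a : ℕ → ℝ) (ha : ∀ j, 0 ≤ a j) (m : ℕ) :
    (∏ j ∈ Finset.range m, (1 + a j)) - 1 ≤
      (∏ j ∈ Finset.range m, (1 + a j)) * ∑ j ∈ Finset.range m, a j := by
  induction m with
  | zero => simp
  | succ m ih =>
    rw [Finset.prod_range_succ, Finset.sum_range_succ]
    have hP : 1 ≤ ∏ j ∈ Finset.range m, (1 + a j) :=
      one_le_prod_real (fun j => by linarith [ha j])
    have hS : 0 ≤ ∑ j ∈ Finset.range m, a j := Finset.sum_nonneg (fun j _ => ha j)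
    have h3 := mul_le_mul_of_nonneg_right ih (by linarith [ha m] : (0:ℝ) ≤ 1 + a m)
    have h4 : 1 + a m ≤ (∏ j ∈ Finset.range m, (1 + a j)) * (1 + a m) :=
      le_mul_of_one_le_left (by linarith [ha m]) hP
    nlinarith [ha m, mul_nonneg (mul_nonneg (by linarith : (0:ℝ) ≤ ∏ j ∈ Finset.range m, (1 + a j)) (ha m)) hS]

lemma key_ineq (q c : ℝ) (hq0 : 0 < q) (hq1 : q < 1) (hc : 0 ≤ c) :
    (∏' j : ℕ, (1 + q ^ j * c)) - 1 ≤ (∏' j : ℕ, (1 + q ^ j * c)) * (c / (1 - q)) := by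
  have hm := (mult_aux q c hq0 hq1 hc).hasProd.tendsto_prod_nat
  refine le_of_tendsto_of_tendsto' (hm.sub_const 1) (hm.mul_const _) (fun m => ?_)
  have h1 := prod_sub_one_le (fun j => q ^ j * c) (fun j => by positivity) m
  have hP : 1 ≤ ∏ j ∈ Finset.range m, (1 + q ^ j * c) :=
    one_le_prod_real (fun j => by nlinarith [pow_nonneg hq0.le j])
  have h2 : ∑ j ∈ Finset.range m, q ^ j * c ≤ c / (1 - q) := by
    rw [← Finset.sum_mul]
    calc (∑ j ∈ Finset.range m, q ^ j) * c ≤ (1 / (1 - q)) * c :=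
          mul_le_mul_of_nonneg_right (geomSum_le' q hq0 hq1 m) hc
      _ = c / (1 - q) := by ring
  calc (∏ j ∈ Finset.range m, (1 + q ^ j * c)) - 1
      ≤ (∏ j ∈ Finset.range m, (1 + q ^ j * c)) * ∑ j ∈ Finset.range m, q ^ j * c := h1
    _ ≤ (∏ j ∈ Finset.range m, (1 + q ^ j * c)) * (c / (1 - q)) :=
        mul_le_mul_of_nonneg_left h2 (by linarith)

lemma one_sub_prod_le (b : ℕ → ℝ) (hb : ∀ j, 0 ≤ b j ∧ b j ≤ 1) (m : ℕ) :
    1 - ∏ j ∈ Finset.range m, (1 - b j) ≤ ∑ j ∈ Finset.range m, b j := by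
  induction m with
  | zero => simp
  | succ m ih =>
    rw [Finset.prod_range_succ, Finset.sum_range_succ]
    have hQ0 : 0 ≤ ∏ j ∈ Finset.range m, (1 - b j) :=
      Finset.prod_nonneg (fun j _ => by linarith [(hb j).2])
    have hQ1 : ∏ j ∈ Finset.range m, (1 - b j) ≤ 1 :=
      Finset.prod_le_one (fun j _ => by linarith [(hb j).2]) (fun j _ => by linarith [(hb j).1])
    nlinarith [(hb m).1, (hb m).2]


lemma qInt_pos {q : ℝ} (hq0 : 0 < q) {m : ℕ} (hm : 1 ≤ m) : 0 < qInt q m := by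
  unfold qInt
  have : 0 < m := hm
  exact Finset.sum_pos (fun i _ => by positivity) (by simp [Finset.nonempty_range_iff]; omega)

lemma qFact_pos {q : ℝ} (hq0 : 0 < q) (m : ℕ) : 0 < qFact q m := by
  induction m with
  | zero => norm_num [qFact]
  | succ m ih => exact mul_pos ih (qInt_pos hq0 (by omega))

lemma qInt_mul (q : ℝ) (m : ℕ) : (1 - q) * qInt q m = 1 - q ^ m := by
  have := geom_sum_mul q m
  unfold qInt
  nlinarith [this]

lemma qFact_add (q : ℝ) (m : ℕ) : ∀ k : ℕ,
    qFact q (m + k) = qFact q m * ∏ j ∈ Finset.range k, qInt q (m + j + 1)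
  | 0 => by simp
  | k + 1 => by
    rw [show m + (k + 1) = (m + k) + 1 from rfl,
      show qFact q ((m + k) + 1) = qFact q (m + k) * qInt q ((m + k) + 1) from rfl,
      qFact_add q m k, Finset.prod_range_succ]
    ring

lemma hA_id (q : ℝ) (hq0 : 0 < q) (n k : ℕ) (hk : k ≤ n) :
    qBinom q n k * ((1 - q) ^ k * qFact q k) = ∏ j ∈ Finset.range k, (1 - q ^ (n - j)) := by
  have h1 : qFact q n = qFact q (n - k) * ∏ j ∈ Finset.range k, qInt q (n - k + j + 1) := by
    rw [← qFact_add q (n - k) k, Nat.sub_add_cancel hk]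
  have h2 : ∏ j ∈ Finset.range k, qInt q (n - k + j + 1) =
      ∏ j ∈ Finset.range k, qInt q (n - j) := by
    rw [← Finset.prod_range_reflect (fun j => qInt q (n - j)) k]
    exact Finset.prod_congr rfl (fun j hj => by
      simp only [Finset.mem_range] at hj
      congr 1
      omega)
  have h3 : ∏ j ∈ Finset.range k, (1 - q ^ (n - j)) =
      (1 - q) ^ k * ∏ j ∈ Finset.range k, qInt q (n - j) := by
    calc ∏ j ∈ Finset.range k, (1 - q ^ (n - j))
        = ∏ j ∈ Finset.range k, ((1 - q) * qInt q (n - j)) :=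
          Finset.prod_congr rfl (fun j _ => (qInt_mul q (n - j)).symm)
      _ = (1 - q) ^ k * ∏ j ∈ Finset.range k, qInt q (n - j) := by
          rw [Finset.prod_mul_distrib, Finset.prod_const, Finset.card_range]
  unfold qBinom
  rw [h1, h2, h3]
  have hk0 := (qFact_pos hq0 k).ne'
  have hnk0 := (qFact_pos hq0 (n - k)).ne'
  field_simp

set_option maxHeartbeats 1000000 in
theorem lupasB_estimate (q : ℝ) (hq0 : 0 < q) (hq1 : q < 1) (x : ℝ)
    (hx : x ∈ Set.Ico (0:ℝ) 1) (n : ℕ) (hn : 1 ≤ n) (k : ℕ) (hk : k ≤ n) :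
    |lupasB q n k x - lupasBInf q k x| ≤
      lupasB q n k x * (x / (1 - x)) * q ^ n / (1 - q) +
        lupasBInf q k x * q ^ (n - k + 1) / (1 - q) := by
  obtain ⟨hx0, hx1⟩ := hx
  have h1x : (0:ℝ) < 1 - x := by linarith
  have h1q : (0:ℝ) < 1 - q := by linarith
  set t := x / (1 - x) with htdef
  have ht : 0 ≤ t := div_nonneg hx0 h1x.le
  have hxt : x = t * (1 - x) := by rw [htdef]; field_simp
  set A := ∏ j ∈ Finset.range k, (1 - q ^ (n - j)) with hAdef
  set B := ∏' j : ℕ, (1 + q ^ j * (q ^ n * t)) with hBdef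
  set Pn := ∏ j ∈ Finset.range n, (1 + q ^ j * t) with hPdef
  set Q := ∏ j ∈ Finset.range (n - 1), (1 + q ^ (j + 1) * t) with hQdef
  have hT : (∏' j : ℕ, (1 + q ^ j * t)) = Pn * B := tprod_split q t hq0 hq1 ht n
  have hPnpos : 0 < Pn := Finset.prod_pos (fun j _ => by positivity)
  have hQpos : 0 < Q := Finset.prod_pos (fun j _ => by positivity)
  have hB1 : 1 ≤ B := oneLeTprodAux q (q ^ n * t) hq0 hq1 (by positivity)
  have hBpos : 0 < B := by linarith
  have hone : (1 - x) * (1 + t) = 1 := by rw [htdef]; field_simp; ring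
  have hPn : Pn = Q * (1 + t) := by
    rw [hPdef, hQdef, show n = (n - 1) + 1 by omega, Finset.prod_range_succ']
    norm_num
  have hD : ∏ j ∈ Finset.range (n - 1), (1 - x + q ^ (j + 1) * x) = (1 - x) ^ (n - 1) * Q := by
    calc ∏ j ∈ Finset.range (n - 1), (1 - x + q ^ (j + 1) * x)
        = ∏ j ∈ Finset.range (n - 1), ((1 - x) * (1 + q ^ (j + 1) * t)) :=
          Finset.prod_congr rfl (fun j _ => by rw [htdef]; field_simp)
      _ = (1 - x) ^ (n - 1) * Q := by
          rw [Finset.prod_mul_distrib, Finset.prod_const, Finset.card_range, hQdef]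
  have hxk : x ^ k = t ^ k * (1 - x) ^ k := by rw [← mul_pow, ← hxt]
  have hnk : (1 - x) ^ k * (1 - x) ^ (n - k) = (1 - x) ^ n := by
    rw [← pow_add]; congr 1; omega
  have hpow : (1 - x) ^ n = (1 - x) ^ (n - 1) * (1 - x) := by
    rw [← pow_succ]; congr 1; omega
  have hlupasB : lupasB q n k x = qBinom q n k * q ^ (k * (k - 1) / 2) * t ^ k / Pn := by
    unfold lupasB
    rw [hD, div_eq_div_iff (by positivity) hPnpos.ne']
    calc qBinom q n k * q ^ (k * (k - 1) / 2) * x ^ k * (1 - x) ^ (n - k) * Pn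
        = qBinom q n k * q ^ (k * (k - 1) / 2) * t ^ k *
            ((1 - x) ^ k * (1 - x) ^ (n - k)) * (Q * (1 + t)) := by rw [hxk, hPn]; ring
      _ = qBinom q n k * q ^ (k * (k - 1) / 2) * t ^ k *
            ((1 - x) ^ (n - 1) * ((1 - x) * (1 + t)) * Q) := by rw [hnk, hpow]; ring
      _ = qBinom q n k * q ^ (k * (k - 1) / 2) * t ^ k * ((1 - x) ^ (n - 1) * Q) := by
            rw [hone]; ring
  have hbinf : lupasBInf q k x =
      q ^ (k * (k - 1) / 2) * t ^ k / ((1 - q) ^ k * qFact q k * (Pn * B)) := by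
    unfold lupasBInf
    simp only [← htdef]
    rw [hT]
  have hqf := qFact_pos hq0 k
  have hid : lupasB q n k x = lupasBInf q k x * A * B := by
    rw [hlupasB, hbinf, hAdef, ← hA_id q hq0 n k hk]
    field_simp
  have hb : 0 ≤ lupasBInf q k x := by
    rw [hbinf]
    apply div_nonneg (by positivity)
    positivity
  have hA0 : 0 ≤ A :=
    Finset.prod_nonneg (fun j _ => by nlinarith [pow_le_one₀ hq0.le hq1.le (n := n - j)])
  have hA1 : A ≤ 1 :=
    Finset.prod_le_one (fun j _ => by nlinarith [pow_le_one₀ hq0.le hq1.le (n := n - j)])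
      (fun j _ => by nlinarith [pow_nonneg hq0.le (n - j)])
  have hWeier : 1 - A ≤ q ^ (n - k + 1) / (1 - q) := by
    calc 1 - A ≤ ∑ j ∈ Finset.range k, q ^ (n - j) :=
          one_sub_prod_le (fun j => q ^ (n - j))
            (fun j => ⟨pow_nonneg hq0.le _, pow_le_one₀ hq0.le hq1.le⟩) k
      _ = q ^ (n - k + 1) * ∑ j ∈ Finset.range k, q ^ j := by
          rw [← Finset.sum_range_reflect (fun j => q ^ (n - j)) k, Finset.mul_sum]
          exact Finset.sum_congr rfl (fun j hj => by
            simp only [Finset.mem_range] at hj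
            rw [← pow_add]; congr 1; omega)
      _ ≤ q ^ (n - k + 1) * (1 / (1 - q)) :=
          mul_le_mul_of_nonneg_left (geomSum_le' q hq0 hq1 k) (by positivity)
      _ = q ^ (n - k + 1) / (1 - q) := by ring
  have hKey : B - 1 ≤ B * (q ^ n * t / (1 - q)) :=
    key_ineq q (q ^ n * t) hq0 hq1 (by positivity)
  set b := lupasBInf q k x with hbdef
  rw [hid]
  have e0 : b * A * B - b = b * A * (B - 1) - b * (1 - A) := by ring
  rw [e0]
  have p1 : 0 ≤ b * A * (B - 1) := mul_nonneg (mul_nonneg hb hA0) (by linarith)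
  have p2 : 0 ≤ b * (1 - A) := mul_nonneg hb (by linarith)
  have habs : |b * A * (B - 1) - b * (1 - A)| ≤ b * A * (B - 1) + b * (1 - A) := by
    rw [abs_le]; constructor <;> nlinarith
  have e1 : b * A * (B - 1) ≤ b * A * B * t * q ^ n / (1 - q) := by
    calc b * A * (B - 1) ≤ b * A * (B * (q ^ n * t / (1 - q))) :=
          mul_le_mul_of_nonneg_left hKey (mul_nonneg hb hA0)
      _ = b * A * B * t * q ^ n / (1 - q) := by ring
  have e2 : b * (1 - A) ≤ b * q ^ (n - k + 1) / (1 - q) := by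
    calc b * (1 - A) ≤ b * (q ^ (n - k + 1) / (1 - q)) :=
          mul_le_mul_of_nonneg_left hWeier hb
      _ = b * q ^ (n - k + 1) / (1 - q) := by ring
  linarith [habs]
end
end

section
/- Let 0 < q < 1 and let f : [0,1] → ℝ be continuous. Then for all n ≥ 1 and all x with 0 ≤ x < 1: |R_{n,q}(f,x) − R_{∞,q}(f,x)| ≤ (2/(1−q)) · (1/(1−x)) · ω(f, q^n). -/
open Finset Filter

noncomputable section

section Aux
variable {q : ℝ}

lemma qInt_nonneg (hq : 0 ≤ q) (n : ℕ) : 0 ≤ qInt q n :=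
  Finset.sum_nonneg fun i _ => pow_nonneg hq i

lemma qInt_pos_s15 (hq : 0 < q) {n : ℕ} (hn : 1 ≤ n) : 0 < qInt q n := by
  have : qInt q n = ∑ i ∈ Finset.range n, q ^ i := rfl
  rw [this]
  apply Finset.sum_pos (fun i _ => pow_pos hq i)
  exact ⟨0, Finset.mem_range.2 hn⟩

lemma qInt_mono (hq : 0 ≤ q) {k n : ℕ} (h : k ≤ n) : qInt q k ≤ qInt q n :=
  Finset.sum_le_sum_of_subset_of_nonneg (Finset.range_subset_range.2 h)
    (fun i _ _ => pow_nonneg hq i)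

lemma one_sub_mul_qInt (n : ℕ) : (1 - q) * qInt q n = 1 - q ^ n := by
  have := geom_sum_mul q n
  unfold qInt
  nlinarith [this]

lemma qFact_pos_s15 (hq : 0 < q) (n : ℕ) : 0 < qFact q n := by
  induction n with
  | zero => norm_num [qFact]
  | succ m ih => exact mul_pos ih (qInt_pos_s15 hq m.succ_pos)

lemma qFact_ne (hq : 0 < q) (n : ℕ) : qFact q n ≠ 0 := (qFact_pos_s15 hq n).ne'

lemma qInt_add (a b : ℕ) : qInt q (a + b) = qInt q a + q ^ a * qInt q b := by
  induction b with
  | zero => simp [qInt]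
  | succ m ih =>
    have h1 : a + (m + 1) = (a + m) + 1 := by ring
    unfold qInt at *
    rw [h1, Finset.sum_range_succ, ih, Finset.sum_range_succ, pow_add]
    ring

-- triangle numbers
lemma tri_succ (k : ℕ) : (k + 1) * k / 2 = k + k * (k - 1) / 2 := by
  rcases k with _ | m
  · rfl
  · have h : (m + 1 + 1) * (m + 1) = 2 * (m + 1) + (m + 1) * m := by ring
    have h2 : (m + 1) * (m + 1 - 1) = (m + 1) * m := by simp
    obtain ⟨c, hc⟩ := Nat.even_mul_succ_self m
    have hc' : (m + 1) * m = c + c := by rw [← hc]; ring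
    rw [h2]
    omega

lemma pow_tri_succ (k : ℕ) : q ^ ((k + 1) * k / 2) = q ^ k * q ^ (k * (k - 1) / 2) := by
  rw [tri_succ, pow_add]

end Aux

section Pascal
variable {q : ℝ}

/-- cutoff coefficient -/
def Chat (q : ℝ) (n k : ℕ) : ℝ :=
  if k ≤ n then qBinom q n k * q ^ (k * (k - 1) / 2) else 0

lemma qBinom_zero (hq : 0 < q) (n : ℕ) : qBinom q n 0 = 1 := by
  unfold qBinom
  simp [qFact, qFact_ne hq n]

lemma qBinom_diag (hq : 0 < q) (n : ℕ) : qBinom q n n = 1 := by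
  unfold qBinom
  simp [qFact, qFact_ne hq n]

lemma Chat_zero (hq : 0 < q) (n : ℕ) : Chat q n 0 = 1 := by
  simp [Chat, qBinom_zero hq]

lemma Chat_nonneg (hq : 0 < q) (hq1 : q < 1) (n k : ℕ) : 0 ≤ Chat q n k := by
  unfold Chat
  split
  · have : 0 ≤ qBinom q n k :=
      le_of_lt (div_pos (qFact_pos_s15 hq n) (mul_pos (qFact_pos_s15 hq k) (qFact_pos_s15 hq _)))
    positivity
  · exact le_refl 0

lemma qBinom_succ (hq : 0 < q) {n k : ℕ} (hk : k < n) :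
    qBinom q (n + 1) (k + 1) = qBinom q n (k + 1) + q ^ (n - k) * qBinom q n k := by
  unfold qBinom
  have h1 : n + 1 - (k + 1) = n - k := by omega
  have h2 : qFact q (n + 1) = qFact q n * qInt q (n + 1) := rfl
  have h3 : qInt q (n + 1) = qInt q (n - k) + q ^ (n - k) * qInt q (k + 1) := by
    have : n + 1 = (n - k) + (k + 1) := by omega
    rw [this, qInt_add]
  have h4 : qFact q (n - k) = qFact q (n - k - 1) * qInt q (n - k) := by
    have hnk : n - k = (n - k - 1) + 1 := by omega
    rw [hnk]; rfl
  have h5 : qFact q (k + 1) = qFact q k * qInt q (k + 1) := rfl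
  have h6 : n - (k + 1) = n - k - 1 := by omega
  rw [h1, h2, h3, h6]
  have e1 : qFact q k ≠ 0 := qFact_ne hq k
  have e2 : qFact q (n - k) ≠ 0 := qFact_ne hq _
  have e3 : qFact q (n - k - 1) ≠ 0 := qFact_ne hq _
  have e4 : qFact q (k + 1) ≠ 0 := qFact_ne hq _
  field_simp
  rw [h4, h5]
  ring

lemma Chat_succ (hq : 0 < q) (n k : ℕ) :
    Chat q (n + 1) (k + 1) = Chat q n (k + 1) + q ^ n * Chat q n k := by
  unfold Chat
  rcases lt_trichotomy (k + 1) (n + 1) with h | h | h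
  · have hk : k < n := by omega
    rw [if_pos (by omega), if_pos (by omega), if_pos (by omega), qBinom_succ hq hk]
    have hthis : q ^ (n - k) * q ^ ((k + 1) * k / 2) = q ^ n * q ^ (k * (k - 1) / 2) := by
      rw [← pow_add, ← pow_add]
      congr 1
      rw [tri_succ]
      omega
    simp only [Nat.add_sub_cancel]
    linear_combination qBinom q n k * hthis
  · have hk : k = n := by omega
    subst hk
    rw [if_pos (by omega), if_neg (by omega), if_pos (by omega), qBinom_diag hq,
      qBinom_diag hq]
    simp only [Nat.add_sub_cancel]
    rw [pow_tri_succ]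
    ring
  · rw [if_neg (by omega), if_neg (by omega), if_neg (by omega)]
    ring

def Pfin (q u : ℝ) (n : ℕ) : ℝ := ∏ j ∈ Finset.range n, (1 + q ^ j * u)

lemma sum_Chat (hq : 0 < q) (u : ℝ) (n : ℕ) :
    ∑ k ∈ Finset.range (n + 1), Chat q n k * u ^ k = Pfin q u n := by
  induction n with
  | zero => simp [Pfin, Chat_zero hq]
  | succ m ih =>
    have h0 : ∑ k ∈ Finset.range (m + 2), Chat q (m + 1) k * u ^ k
        = ∑ k ∈ Finset.range (m + 1), Chat q (m + 1) (k + 1) * u ^ (k + 1)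
          + Chat q (m + 1) 0 * u ^ 0 := Finset.sum_range_succ' _ _
    have h1 : ∀ k, Chat q (m + 1) (k + 1) * u ^ (k + 1)
        = Chat q m (k + 1) * u ^ (k + 1) + (q ^ m * u) * (Chat q m k * u ^ k) := by
      intro k; rw [Chat_succ hq]; ring
    have h2 : ∑ k ∈ Finset.range (m + 2), Chat q m k * u ^ k
        = ∑ k ∈ Finset.range (m + 1), Chat q m (k + 1) * u ^ (k + 1)
          + Chat q m 0 * u ^ 0 := Finset.sum_range_succ' _ _
    have h3 : ∑ k ∈ Finset.range (m + 2), Chat q m k * u ^ k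
        = ∑ k ∈ Finset.range (m + 1), Chat q m k * u ^ k + Chat q m (m + 1) * u ^ (m + 1) :=
      Finset.sum_range_succ _ _
    have h4 : Chat q m (m + 1) = 0 := by simp [Chat]
    have h5 : Pfin q u (m + 1) = Pfin q u m * (1 + q ^ m * u) := Finset.prod_range_succ _ _
    have h6 : ∑ k ∈ Finset.range (m + 1), Chat q m (k + 1) * u ^ (k + 1)
        = Pfin q u m - 1 := by
      rw [ih, h4] at h3
      rw [h3, Chat_zero hq] at h2
      simp at h2
      linarith
    rw [h0]
    simp only [h1]
    rw [Finset.sum_add_distrib, ← Finset.mul_sum, ih, Chat_zero hq, h6, h5]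
    ring

end Pascal

section InfProd
variable {q v : ℝ}

def Pinf (q u : ℝ) : ℝ := ∏' j : ℕ, (1 + q ^ j * u)

lemma summable_log_one_add (hq0 : 0 < q) (hq1 : q < 1) (hv : 0 ≤ v) :
    Summable fun j : ℕ => Real.log (1 + q ^ j * v) := by
  apply Summable.of_nonneg_of_le
    (fun j => Real.log_nonneg (by nlinarith [pow_pos hq0 j]))
    (fun j => ?_) ((summable_geometric_of_lt_one hq0.le hq1).mul_right v)
  have h1 : (0:ℝ) < 1 + q ^ j * v := by positivity
  calc Real.log (1 + q ^ j * v) ≤ (1 + q ^ j * v) - 1 := Real.log_le_sub_one_of_pos h1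
    _ = q ^ j * v := by ring

lemma hasProd_Pinf (hq0 : 0 < q) (hq1 : q < 1) (hv : 0 ≤ v) :
    HasProd (fun j : ℕ => 1 + q ^ j * v) (Pinf q v) :=
  (Real.multipliable_of_summable_log (fun j => show (0:ℝ) < 1 + q ^ j * v by positivity)
    (summable_log_one_add hq0 hq1 hv)).hasProd

lemma tendsto_Pfin (hq0 : 0 < q) (hq1 : q < 1) (hv : 0 ≤ v) :
    Tendsto (fun N => Pfin q v N) atTop (nhds (Pinf q v)) :=
  (hasProd_Pinf hq0 hq1 hv).tendsto_prod_nat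

lemma Pfin_pos (hq0 : 0 < q) (hv : 0 ≤ v) (n : ℕ) : 0 < Pfin q v n :=
  Finset.prod_pos fun j _ => by positivity

lemma one_le_Pfin (hq0 : 0 < q) (hv : 0 ≤ v) (n : ℕ) : 1 ≤ Pfin q v n := by
  have := Finset.prod_le_prod (f := fun _ : ℕ => (1:ℝ)) (g := fun j => 1 + q ^ j * v)
    (s := Finset.range n) (fun j _ => by norm_num) (fun j _ => by show (1:ℝ) ≤ 1 + q ^ j * v; nlinarith [mul_nonneg (pow_nonneg hq0.le j) hv])
  simpa [Pfin] using this

lemma Pfin_mono (hq0 : 0 < q) (hv : 0 ≤ v) : Monotone (Pfin q v) := by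
  apply monotone_nat_of_le_succ
  intro n
  have h : Pfin q v (n + 1) = Pfin q v n * (1 + q ^ n * v) := Finset.prod_range_succ _ _
  nlinarith [Pfin_pos hq0 hv n, pow_pos hq0 n, mul_nonneg (pow_nonneg hq0.le n) hv]

lemma Pfin_le_Pinf (hq0 : 0 < q) (hq1 : q < 1) (hv : 0 ≤ v) (n : ℕ) :
    Pfin q v n ≤ Pinf q v :=
  (Pfin_mono hq0 hv).ge_of_tendsto (tendsto_Pfin hq0 hq1 hv) n

lemma one_le_Pinf (hq0 : 0 < q) (hq1 : q < 1) (hv : 0 ≤ v) : 1 ≤ Pinf q v := by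
  have := Pfin_le_Pinf hq0 hq1 hv 0
  simpa [Pfin] using this

lemma Pinf_pos (hq0 : 0 < q) (hq1 : q < 1) (hv : 0 ≤ v) : 0 < Pinf q v :=
  lt_of_lt_of_le one_pos (one_le_Pinf hq0 hq1 hv)

lemma Pinf_succ (hq0 : 0 < q) (hq1 : q < 1) (hv : 0 ≤ v) :
    Pinf q v = (1 + v) * Pinf q (q * v) := by
  have h1 : ∀ N, Pfin q v (N + 1) = (1 + v) * Pfin q (q * v) N := by
    intro N
    unfold Pfin
    rw [Finset.prod_range_succ']
    have h : ∀ j, 1 + q ^ (j + 1) * v = 1 + q ^ j * (q * v) := fun j => by ring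
    rw [Finset.prod_congr rfl (fun j _ => h j)]
    simp [mul_comm]
  have t1 : Tendsto (fun N => Pfin q v (N + 1)) atTop (nhds (Pinf q v)) :=
    (tendsto_Pfin hq0 hq1 hv).comp (tendsto_add_atTop_nat 1)
  have t2 : Tendsto (fun N => (1 + v) * Pfin q (q * v) N) atTop
      (nhds ((1 + v) * Pinf q (q * v))) :=
    (tendsto_Pfin hq0 hq1 (by positivity)).const_mul _
  exact tendsto_nhds_unique ((t1.congr (fun N => h1 N))) t2

lemma Pfin_bound (hq0 : 0 < q) (hq1 : q < 1) (hv : 0 ≤ v) (N : ℕ) :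
    Pfin q v N * (1 - v / (1 - q)) ≤ 1 := by
  have hS : ∀ N, Pfin q v N * (1 - ∑ j ∈ Finset.range N, q ^ j * v) ≤ 1 := by
    intro N
    induction N with
    | zero => simp [Pfin]
    | succ m ih =>
      have hp : Pfin q v (m + 1) = Pfin q v m * (1 + q ^ m * v) := Finset.prod_range_succ _ _
      have hs : ∑ j ∈ Finset.range (m + 1), q ^ j * v
          = (∑ j ∈ Finset.range m, q ^ j * v) + q ^ m * v := Finset.sum_range_succ _ _
      have ha : 0 ≤ q ^ m * v := by positivity
      have hS0 : 0 ≤ ∑ j ∈ Finset.range m, q ^ j * v :=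
        Finset.sum_nonneg fun j _ => by positivity
      have hPp := Pfin_pos hq0 hv m
      rw [hp, hs]
      nlinarith [ih, mul_nonneg (mul_nonneg hPp.le ha) (add_nonneg hS0 ha)]
  have hs2 : ∑ j ∈ Finset.range N, q ^ j * v ≤ v / (1 - q) := by
    have h1 : ∑ j ∈ Finset.range N, q ^ j * v = qInt q N * v := by
      rw [qInt, Finset.sum_mul]
    have h2 : (1 - q) * qInt q N = 1 - q ^ N := one_sub_mul_qInt N
    have h3 : 0 < 1 - q := by linarith
    rw [h1, le_div_iff₀ h3]
    nlinarith [pow_pos hq0 N, qInt_nonneg hq0.le N]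
  have := Pfin_pos hq0 hv N
  calc Pfin q v N * (1 - v / (1 - q)) ≤ Pfin q v N * (1 - ∑ j ∈ Finset.range N, q ^ j * v) := by
        apply mul_le_mul_of_nonneg_left _ this.le
        linarith
    _ ≤ 1 := hS N

lemma Pinf_bound (hq0 : 0 < q) (hq1 : q < 1) (hv : 0 ≤ v) :
    Pinf q v * (1 - v / (1 - q)) ≤ 1 :=
  le_of_tendsto ((tendsto_Pfin hq0 hq1 hv).mul_const _)
    (Filter.Eventually.of_forall (Pfin_bound hq0 hq1 hv))

end InfProd

section GfSec
variable {q u v : ℝ}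

def cInf (q : ℝ) (k : ℕ) : ℝ := q ^ (k * (k - 1) / 2) / ((1 - q) ^ k * qFact q k)

def Gf (q u : ℝ) (k : ℕ) : ℝ := cInf q k * u ^ k / Pinf q u

lemma cInf_pos (hq0 : 0 < q) (hq1 : q < 1) (k : ℕ) : 0 < cInf q k :=
  div_pos (pow_pos hq0 _) (mul_pos (pow_pos (by linarith) k) (qFact_pos_s15 hq0 k))

lemma cInf_succ (hq0 : 0 < q) (hq1 : q < 1) (k : ℕ) :
    (1 - q ^ (k + 1)) * cInf q (k + 1) = q ^ k * cInf q k := by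
  have h1 : qFact q (k + 1) = qFact q k * qInt q (k + 1) := rfl
  have h2 : (1 - q) * qInt q (k + 1) = 1 - q ^ (k + 1) := one_sub_mul_qInt _
  have hf : qFact q k ≠ 0 := qFact_ne hq0 k
  have hi : qInt q (k + 1) ≠ 0 := (qInt_pos_s15 hq0 (Nat.succ_pos k)).ne'
  have hq : (1 - q) ≠ 0 := by intro h; nlinarith
  have hqk : (1 - q) ^ k ≠ 0 := pow_ne_zero _ hq
  unfold cInf
  simp only [Nat.add_sub_cancel]
  rw [pow_tri_succ (q := q), h1, pow_succ]
  field_simp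
  linear_combination (-(1 - q) ^ k) * h2

lemma Gf_nonneg (hq0 : 0 < q) (hq1 : q < 1) (hv : 0 ≤ v) (k : ℕ) : 0 ≤ Gf q v k :=
  div_nonneg (mul_nonneg (cInf_pos hq0 hq1 k).le (pow_nonneg hv k))
    (Pinf_pos hq0 hq1 hv).le

lemma Gf_zero_eq (q v : ℝ) : Gf q v 0 = 1 / Pinf q v := by
  simp [Gf, cInf, qFact]

lemma one_sub_Gf_zero (hq0 : 0 < q) (hq1 : q < 1) (hv : 0 ≤ v) :
    1 - Gf q v 0 ≤ v / (1 - q) := by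
  have hP := Pinf_pos hq0 hq1 hv
  have hb := Pinf_bound hq0 hq1 hv
  rw [Gf_zero_eq]
  have h1q : (0:ℝ) < 1 - q := by linarith
  have h3 : 1 - v / (1 - q) ≤ 1 / Pinf q v := by
    rw [le_div_iff₀ hP]
    nlinarith [hb]
  linarith

lemma Gf_rec (hq0 : 0 < q) (hq1 : q < 1) (hv : 0 ≤ v) (m : ℕ) :
    (1 + v) * Gf q v m
      = Gf q (q * v) m + v * (if m = 0 then 0 else Gf q (q * v) (m - 1)) := by
  have hqv : 0 ≤ q * v := by positivity
  have hP := Pinf_pos hq0 hq1 hv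
  have hP2 := Pinf_pos hq0 hq1 hqv
  have hPs := Pinf_succ hq0 hq1 hv
  rcases m with _ | k
  · simp only [if_pos rfl, if_true, mul_zero, add_zero, Gf_zero_eq]
    rw [hPs]
    field_simp
  · rw [if_neg (Nat.succ_ne_zero k), Nat.add_sub_cancel]
    unfold Gf
    rw [hPs]
    have hcs := cInf_succ hq0 hq1 k
    have h1v : (0:ℝ) < 1 + v := by linarith
    have hb : v * (cInf q k * (q * v) ^ k / Pinf q (q * v))
        = v * (cInf q k * (q * v) ^ k) / Pinf q (q * v) := by ring
    have hb2 : (1 + v) * (cInf q (k + 1) * v ^ (k + 1) / ((1 + v) * Pinf q (q * v)))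
        = ((1 + v) * (cInf q (k + 1) * v ^ (k + 1))) / ((1 + v) * Pinf q (q * v)) := by ring
    rw [hb, hb2, ← add_div,
      div_eq_div_iff (show ((1 + v) * Pinf q (q * v)) ≠ 0 by positivity) hP2.ne']
    linear_combination ((1 + v) * Pinf q (q * v) * v ^ (k + 1)) * hcs
  
end GfSec

section Euler
variable {q v : ℝ}

lemma qFact_split (hq0 : 0 < q) {k N : ℕ} (hk : k ≤ N) :
    qFact q N = qFact q (N - k) * ∏ i ∈ Finset.range k, qInt q (N - k + 1 + i) := by
  induction k with
  | zero => simp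
  | succ m ih =>
    have hm : m ≤ N := by omega
    have h1 : N - m = (N - (m + 1)) + 1 := by omega
    have h2 : qFact q (N - m) = qFact q (N - (m + 1)) * qInt q (N - m) := by
      rw [h1]; rfl
    have h3 : ∏ i ∈ Finset.range (m + 1), qInt q (N - (m + 1) + 1 + i)
        = (∏ i ∈ Finset.range m, qInt q (N - (m + 1) + 1 + (i + 1)))
          * qInt q (N - (m + 1) + 1 + 0) := Finset.prod_range_succ' _ _
    have h4 : ∀ i, N - (m + 1) + 1 + (i + 1) = N - m + 1 + i := by omega
    have h5 : N - (m + 1) + 1 + 0 = N - m := by omega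
    rw [h3]
    have h6 : (∏ i ∈ Finset.range m, qInt q (N - (m + 1) + 1 + (i + 1)))
        = ∏ i ∈ Finset.range m, qInt q (N - m + 1 + i) :=
      Finset.prod_congr rfl (fun i _ => by rw [h4 i])
    rw [h6, h5, ih hm, h2]
    ring

lemma Chat_eq_cInf (hq0 : 0 < q) (hq1 : q < 1) {k N : ℕ} (hk : k ≤ N) :
    Chat q N k = cInf q k * ∏ i ∈ Finset.range k, (1 - q ^ (N - k + 1 + i)) := by
  have hsplit := qFact_split hq0 hk
  have h1 : ∀ i, (1 : ℝ) - q ^ (N - k + 1 + i) = (1 - q) * qInt q (N - k + 1 + i) :=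
    fun i => (one_sub_mul_qInt _).symm
  rw [Finset.prod_congr rfl (fun i _ => h1 i), Finset.prod_mul_distrib,
    Finset.prod_const, Finset.card_range]
  unfold Chat cInf qBinom
  rw [if_pos hk, hsplit]
  have e1 : qFact q k ≠ 0 := qFact_ne hq0 k
  have e2 : qFact q (N - k) ≠ 0 := qFact_ne hq0 _
  have e3 : ((1 : ℝ) - q) ^ k ≠ 0 := pow_ne_zero _ (by intro h; nlinarith)
  field_simp

lemma A_mem (hq0 : 0 < q) (hq1 : q < 1) (k N : ℕ) :
    0 ≤ ∏ i ∈ Finset.range k, (1 - q ^ (N - k + 1 + i))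
      ∧ ∏ i ∈ Finset.range k, (1 - q ^ (N - k + 1 + i)) ≤ 1 := by
  constructor
  · apply Finset.prod_nonneg
    intro i _
    have : q ^ (N - k + 1 + i) ≤ 1 := pow_le_one₀ hq0.le hq1.le
    linarith
  · apply Finset.prod_le_one
    · intro i _
      have : q ^ (N - k + 1 + i) ≤ 1 := pow_le_one₀ hq0.le hq1.le
      linarith
    · intro i _
      have : 0 < q ^ (N - k + 1 + i) := pow_pos hq0 _
      linarith

lemma A_tendsto (hq0 : 0 < q) (hq1 : q < 1) (k : ℕ) :
    Tendsto (fun N => ∏ i ∈ Finset.range k, (1 - q ^ (N - k + 1 + i))) atTop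
      (nhds 1) := by
  have h : ∀ i ∈ Finset.range k, Tendsto (fun N => 1 - q ^ (N - k + 1 + i)) atTop
      (nhds 1) := by
    intro i _
    have h1 : Tendsto (fun N : ℕ => q ^ (N - k + 1 + i)) atTop (nhds 0) := by
      apply squeeze_zero (fun N => (pow_pos hq0 _).le) (fun N => ?_)
        ((tendsto_pow_atTop_nhds_zero_of_lt_one hq0.le hq1).comp
          (tendsto_sub_atTop_nat k))
      show q ^ (N - k + 1 + i) ≤ q ^ (N - k)
      apply pow_le_pow_of_le_one hq0.le hq1.le
      omega
    have := h1.const_sub 1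
    simpa using this
  have := tendsto_finset_prod (Finset.range k) h
  simpa using this

lemma sum_cInf_le (hq0 : 0 < q) (hq1 : q < 1) (hv : 0 ≤ v) (K : ℕ) :
    ∑ k ∈ Finset.range K, cInf q k * v ^ k ≤ Pinf q v := by
  have hten : Tendsto
      (fun N => ∑ k ∈ Finset.range K, cInf q k
        * (∏ i ∈ Finset.range k, (1 - q ^ (N - k + 1 + i))) * v ^ k) atTop
      (nhds (∑ k ∈ Finset.range K, cInf q k * 1 * v ^ k)) := by
    apply tendsto_finset_sum
    intro k _
    exact (((A_tendsto hq0 hq1 k).const_mul (cInf q k)).mul_const (v ^ k))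
  have hev : ∀ N ≥ K, (fun N => ∑ k ∈ Finset.range K, cInf q k
        * (∏ i ∈ Finset.range k, (1 - q ^ (N - k + 1 + i))) * v ^ k) N ≤ Pinf q v := by
    intro N hN
    have h1 : ∑ k ∈ Finset.range K, cInf q k
          * (∏ i ∈ Finset.range k, (1 - q ^ (N - k + 1 + i))) * v ^ k
        = ∑ k ∈ Finset.range K, Chat q N k * v ^ k := by
      apply Finset.sum_congr rfl
      intro k hk
      have hkN : k ≤ N := le_trans (Nat.le_of_lt_succ
        (Nat.lt_succ_of_lt (Finset.mem_range.1 hk))) hN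
      rw [Chat_eq_cInf hq0 hq1 hkN]
      try ring
    have h2 : ∑ k ∈ Finset.range K, Chat q N k * v ^ k
        ≤ ∑ k ∈ Finset.range (N + 1), Chat q N k * v ^ k := by
      apply Finset.sum_le_sum_of_subset_of_nonneg
        (Finset.range_subset_range.2 (by omega))
      intro k _ _
      exact mul_nonneg (Chat_nonneg hq0 hq1 N k) (pow_nonneg hv k)
    simp only []
    rw [h1]
    calc ∑ k ∈ Finset.range K, Chat q N k * v ^ k
        ≤ ∑ k ∈ Finset.range (N + 1), Chat q N k * v ^ k := h2
      _ = Pfin q v N := sum_Chat hq0 v N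
      _ ≤ Pinf q v := Pfin_le_Pinf hq0 hq1 hv N
  have hlim : ∑ k ∈ Finset.range K, cInf q k * 1 * v ^ k
      = ∑ k ∈ Finset.range K, cInf q k * v ^ k := by
    apply Finset.sum_congr rfl; intro k _; ring
  rw [← hlim]
  exact le_of_tendsto hten (Filter.eventually_atTop.2 ⟨K, hev⟩)

lemma summable_cInf (hq0 : 0 < q) (hq1 : q < 1) (hv : 0 ≤ v) :
    Summable (fun k => cInf q k * v ^ k) :=
  summable_of_sum_range_le
    (fun k => mul_nonneg (cInf_pos hq0 hq1 k).le (pow_nonneg hv k))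
    (fun K => sum_cInf_le hq0 hq1 hv K)

lemma tsum_cInf_eq (hq0 : 0 < q) (hq1 : q < 1) (hv : 0 ≤ v) :
    ∑' k, cInf q k * v ^ k = Pinf q v := by
  apply le_antisymm
  · exact Summable.tsum_le_of_sum_range_le (summable_cInf hq0 hq1 hv)
      (fun K => sum_cInf_le hq0 hq1 hv K)
  · apply le_of_tendsto (tendsto_Pfin hq0 hq1 hv)
    apply Filter.Eventually.of_forall
    intro N
    calc Pfin q v N = ∑ k ∈ Finset.range (N + 1), Chat q N k * v ^ k :=
          (sum_Chat hq0 v N).symm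
      _ ≤ ∑ k ∈ Finset.range (N + 1), cInf q k * v ^ k := by
          apply Finset.sum_le_sum
          intro k hk
          have hkN : k ≤ N := Nat.le_of_lt_succ (Finset.mem_range.1 hk)
          rw [Chat_eq_cInf hq0 hq1 hkN]
          have hA := A_mem hq0 hq1 k N
          have hc := (cInf_pos hq0 hq1 k).le
          have hvk : (0:ℝ) ≤ v ^ k := pow_nonneg hv k
          exact mul_le_mul_of_nonneg_right (mul_le_of_le_one_right hc hA.2) hvk
      _ ≤ ∑' k, cInf q k * v ^ k := Summable.sum_le_tsum _
          (fun k _ => mul_nonneg (cInf_pos hq0 hq1 k).le (pow_nonneg hv k))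
          (summable_cInf hq0 hq1 hv)

lemma summable_Gf (hq0 : 0 < q) (hq1 : q < 1) (hv : 0 ≤ v) :
    Summable (Gf q v) := by
  unfold Gf
  exact (summable_cInf hq0 hq1 hv).div_const _

lemma tsum_Gf (hq0 : 0 < q) (hq1 : q < 1) (hv : 0 ≤ v) :
    ∑' k, Gf q v k = 1 := by
  unfold Gf
  rw [tsum_div_const, tsum_cInf_eq hq0 hq1 hv, div_self (Pinf_pos hq0 hq1 hv).ne']

end Euler

section Conv
variable {q u : ℝ}

lemma conv_id (hq0 : 0 < q) (hq1 : q < 1) (hu : 0 ≤ u) :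
    ∀ n j, Pfin q u n * Gf q u j
      = ∑ k ∈ Finset.range (j + 1), Chat q n k * u ^ k * Gf q (q ^ n * u) (j - k) := by
  intro n
  induction n with
  | zero =>
    intro j
    have h0 : Pfin q u 0 = 1 := by simp [Pfin]
    have h0' : q ^ 0 * u = u := by simp
    rw [h0, one_mul, h0']
    rw [Finset.sum_eq_single 0]
    · simp [Chat_zero hq0]
    · intro k _ hk0
      have hc : Chat q 0 k = 0 := by
        unfold Chat; rw [if_neg (by omega)]
      simp [hc]
    · intro h; exact absurd (Finset.mem_range.2 (Nat.succ_pos j)) h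
  | succ n ih =>
    intro j
    have hqnu : 0 ≤ q ^ n * u := by positivity
    have hrec : ∀ m, (1 + q ^ n * u) * Gf q (q ^ n * u) m
        = Gf q (q ^ (n + 1) * u) m
          + q ^ n * u * (if m = 0 then 0 else Gf q (q ^ (n + 1) * u) (m - 1)) := by
      intro m
      have h := Gf_rec hq0 hq1 hqnu m
      have hq' : q * (q ^ n * u) = q ^ (n + 1) * u := by ring
      rw [hq'] at h
      exact h
    have h1 : Pfin q u (n + 1) = Pfin q u n * (1 + q ^ n * u) := Finset.prod_range_succ _ _
    have hB : ∑ k ∈ Finset.range (j + 1), Chat q n k * u ^ k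
          * (if j - k = 0 then 0 else Gf q (q ^ (n + 1) * u) (j - k - 1))
        = ∑ k ∈ Finset.range j, Chat q n k * u ^ k * Gf q (q ^ (n + 1) * u) (j - (k + 1)) := by
      rw [Finset.sum_range_succ]
      rw [if_pos (Nat.sub_self j)]
      rw [mul_zero, add_zero]
      apply Finset.sum_congr rfl
      intro k hk
      have hk' : j - k ≠ 0 := by
        have := Finset.mem_range.1 hk; omega
      rw [if_neg hk', Nat.sub_sub]
    have hT : ∑ k ∈ Finset.range (j + 1), Chat q (n + 1) k * u ^ k * Gf q (q ^ (n + 1) * u) (j - k)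
        = (∑ k ∈ Finset.range (j + 1), Chat q n k * u ^ k * Gf q (q ^ (n + 1) * u) (j - k))
          + q ^ n * u * ∑ k ∈ Finset.range j, Chat q n k * u ^ k * Gf q (q ^ (n + 1) * u) (j - (k + 1)) := by
      rw [Finset.sum_range_succ' (fun k => Chat q (n + 1) k * u ^ k * Gf q (q ^ (n + 1) * u) (j - k)) j,
        Finset.sum_range_succ' (fun k => Chat q n k * u ^ k * Gf q (q ^ (n + 1) * u) (j - k)) j]
      simp only [Chat_succ hq0, Chat_zero hq0, pow_zero]
      have hsplit : ∀ k, (Chat q n (k + 1) + q ^ n * Chat q n k) * u ^ (k + 1)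
            * Gf q (q ^ (n + 1) * u) (j - (k + 1))
          = Chat q n (k + 1) * u ^ (k + 1) * Gf q (q ^ (n + 1) * u) (j - (k + 1))
            + q ^ n * u * (Chat q n k * u ^ k * Gf q (q ^ (n + 1) * u) (j - (k + 1))) :=
        fun k => by ring
      simp only [hsplit]
      rw [Finset.sum_add_distrib, ← Finset.mul_sum]
      ring
    calc Pfin q u (n + 1) * Gf q u j
        = (1 + q ^ n * u) * (Pfin q u n * Gf q u j) := by rw [h1]; ring
      _ = (1 + q ^ n * u)
          * ∑ k ∈ Finset.range (j + 1), Chat q n k * u ^ k * Gf q (q ^ n * u) (j - k) := by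
          rw [ih j]
      _ = ∑ k ∈ Finset.range (j + 1), Chat q n k * u ^ k
            * ((1 + q ^ n * u) * Gf q (q ^ n * u) (j - k)) := by
          rw [Finset.mul_sum]
          exact Finset.sum_congr rfl (fun k _ => by ring)
      _ = ∑ k ∈ Finset.range (j + 1), (Chat q n k * u ^ k * Gf q (q ^ (n + 1) * u) (j - k)
            + q ^ n * u * (Chat q n k * u ^ k
              * (if j - k = 0 then 0 else Gf q (q ^ (n + 1) * u) (j - k - 1)))) := by
          apply Finset.sum_congr rfl
          intro k _
          rw [hrec (j - k)]
          ring
      _ = (∑ k ∈ Finset.range (j + 1), Chat q n k * u ^ k * Gf q (q ^ (n + 1) * u) (j - k))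
          + q ^ n * u * ∑ k ∈ Finset.range (j + 1), Chat q n k * u ^ k
            * (if j - k = 0 then 0 else Gf q (q ^ (n + 1) * u) (j - k - 1)) := by
          rw [Finset.sum_add_distrib, ← Finset.mul_sum]
      _ = ∑ k ∈ Finset.range (j + 1), Chat q (n + 1) k * u ^ k * Gf q (q ^ (n + 1) * u) (j - k) := by
          rw [hB, hT]

end Conv

section Omega
variable {f : ℝ → ℝ} {t : ℝ}

lemma omega1_bdd (hf : ContinuousOn f (Set.Icc 0 1)) (t : ℝ) :
    BddAbove {d | ∃ x ∈ Set.Icc (0:ℝ) 1, ∃ y ∈ Set.Icc (0:ℝ) 1, |x - y| ≤ t ∧ d = |f x - f y|} := by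
  obtain ⟨C, hC⟩ := isCompact_Icc.exists_bound_of_continuousOn hf
  refine ⟨2 * C, fun d hd => ?_⟩
  obtain ⟨a, ha, b, hb, _, rfl⟩ := hd
  have h1 := hC a ha
  have h2 := hC b hb
  rw [Real.norm_eq_abs] at h1 h2
  have h3 : |f a - f b| ≤ |f a| + |f b| := by
    have := abs_add_le (f a) (-(f b))
    simpa [sub_eq_add_neg] using this
  linarith

lemma omega1_nonneg (hf : ContinuousOn f (Set.Icc 0 1)) (ht : 0 ≤ t) :
    0 ≤ omega1 f t := by
  apply le_csSup (omega1_bdd hf t)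
  exact ⟨0, by norm_num, 0, by norm_num, by simpa using ht, by simp⟩

lemma le_omega1 (hf : ContinuousOn f (Set.Icc 0 1)) {a b : ℝ}
    (ha : a ∈ Set.Icc (0:ℝ) 1) (hb : b ∈ Set.Icc (0:ℝ) 1) (hab : |a - b| ≤ t) :
    |f a - f b| ≤ omega1 f t :=
  le_csSup (omega1_bdd hf t) ⟨a, ha, b, hb, hab, rfl⟩

lemma omega1_chain (hf : ContinuousOn f (Set.Icc 0 1)) {ε : ℝ} (hε : 0 < ε)
    {s r : ℝ} (hs : s ∈ Set.Icc (0:ℝ) 1) (hr : r ∈ Set.Icc (0:ℝ) 1) :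
    |f s - f r| ≤ (1 + |s - r| / ε) * omega1 f ε := by
  have hω : 0 ≤ omega1 f ε := omega1_nonneg hf hε.le
  have key : ∀ a b : ℝ, a ∈ Set.Icc (0:ℝ) 1 → b ∈ Set.Icc (0:ℝ) 1 → b ≤ a →
      |f a - f b| ≤ (1 + (a - b) / ε) * omega1 f ε := by
    intro a b ha hb hba
    by_cases hab : a - b ≤ ε
    · have h1 : |f a - f b| ≤ omega1 f ε :=
        le_omega1 hf ha hb (by rw [abs_of_nonneg (by linarith)]; linarith)
      have h2 : 0 ≤ (a - b) / ε := div_nonneg (by linarith) hε.le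
      nlinarith
    · push_neg at hab
      set m : ℕ := ⌈(a - b) / ε⌉₊ with hm
      have hd : 0 < a - b := by linarith
      have hm0 : 0 < m := Nat.ceil_pos.2 (div_pos hd hε)
      have hmR : (0:ℝ) < m := Nat.cast_pos.2 hm0
      set δ : ℝ := (a - b) / m with hδ
      have hδ0 : 0 ≤ δ := div_nonneg hd.le hmR.le
      have hmδ : (m:ℝ) * δ = a - b := by
        rw [hδ]; field_simp
      have hδε : δ ≤ ε := by
        have h1 : (a - b) / ε ≤ m := Nat.le_ceil _
        rw [hδ, div_le_iff₀ hmR]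
        rw [div_le_iff₀ hε] at h1
        linarith [mul_comm (ε) (m:ℝ)]
      have hp : ∀ i : ℕ, i ≤ m → b + i * δ ∈ Set.Icc (0:ℝ) 1 := by
        intro i hi
        constructor
        · have : 0 ≤ (i:ℝ) * δ := mul_nonneg (Nat.cast_nonneg i) hδ0
          linarith [hb.1]
        · have h1 : (i:ℝ) * δ ≤ (m:ℝ) * δ :=
            mul_le_mul_of_nonneg_right (Nat.cast_le.2 hi) hδ0
          have := ha.2
          linarith [hmδ]
      set g : ℕ → ℝ := fun i => b + (i:ℝ) * δ with hg
      have tele : ∑ i ∈ Finset.range m, (f (g (i+1)) - f (g i)) = f (g m) - f (g 0) :=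
        Finset.sum_range_sub (fun i => f (g i)) m
      have hgm : g m = a := by rw [hg]; simp only []; rw [hmδ]; ring
      have hg0 : g 0 = b := by rw [hg]; simp
      have habs : |f a - f b| ≤ (m:ℝ) * omega1 f ε := by
        have h1 : f a - f b = ∑ i ∈ Finset.range m, (f (g (i+1)) - f (g i)) := by
          rw [tele, hgm, hg0]
        rw [h1]
        calc |∑ i ∈ Finset.range m, (f (g (i+1)) - f (g i))|
            ≤ ∑ i ∈ Finset.range m, |f (g (i+1)) - f (g i)| :=
              Finset.abs_sum_le_sum_abs _ _
          _ ≤ ∑ _i ∈ Finset.range m, omega1 f ε := by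
              apply Finset.sum_le_sum
              intro i hi
              have hi' : i < m := Finset.mem_range.1 hi
              apply le_omega1 hf (hp (i+1) (by omega)) (hp i (by omega))
              have hdiff : g (i+1) - g i = δ := by
                rw [hg]; push_cast; ring
              rw [hdiff, abs_of_nonneg hδ0]
              exact hδε
          _ = (m:ℝ) * omega1 f ε := by
              rw [Finset.sum_const, Finset.card_range, nsmul_eq_mul]
      have hmle : (m:ℝ) ≤ 1 + (a - b) / ε := by
        have := Nat.ceil_lt_add_one (le_of_lt (div_pos hd hε))
        rw [← hm] at this
        linarith
      calc |f a - f b| ≤ (m:ℝ) * omega1 f ε := habs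
        _ ≤ (1 + (a - b) / ε) * omega1 f ε :=
            mul_le_mul_of_nonneg_right hmle hω
  rcases le_total r s with h | h
  · have := key s r hs hr h
    rwa [abs_of_nonneg (by linarith : (0:ℝ) ≤ s - r)]
  · have := key r s hr hs h
    rw [abs_sub_comm s r, abs_sub_comm (f s) (f r)]
    rwa [abs_of_nonneg (by linarith : (0:ℝ) ≤ r - s)] at *

end Omega

section Translate
variable {q x : ℝ}

lemma lupasBInf_eq (q x : ℝ) (k : ℕ) : lupasBInf q k x = Gf q (x / (1 - x)) k := by
  unfold lupasBInf Gf cInf Pinf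
  ring

lemma lupasB_eq (hq0 : 0 < q) (hq1 : q < 1) (hx0 : 0 ≤ x) (hx1 : x < 1)
    {n k : ℕ} (hn : 1 ≤ n) (hk : k ≤ n) :
    lupasB q n k x = Chat q n k * (x / (1 - x)) ^ k / Pfin q (x / (1 - x)) n := by
  obtain ⟨m, rfl⟩ : ∃ m, n = m + 1 := ⟨n - 1, by omega⟩
  have h1x : 0 < 1 - x := by linarith
  set u : ℝ := x / (1 - x) with hudef
  have hu : 0 ≤ u := div_nonneg hx0 h1x.le
  have hxu : u * (1 - x) = x := div_mul_cancel₀ x h1x.ne'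
  have hQpos : ∀ j : ℕ, (0:ℝ) < 1 + q ^ (j + 1) * u := fun j => by positivity
  set Q : ℝ := ∏ j ∈ Finset.range m, (1 + q ^ (j + 1) * u) with hQdef
  have hQ0 : 0 < Q := Finset.prod_pos fun j _ => hQpos j
  have hD : ∏ j ∈ Finset.range ((m + 1) - 1), (1 - x + q ^ (j + 1) * x)
      = (1 - x) ^ m * Q := by
    simp only [Nat.add_sub_cancel]
    have hrhs : (1 - x) ^ m * Q = ∏ j ∈ Finset.range m, ((1 - x) * (1 + q ^ (j + 1) * u)) := by
      rw [Finset.prod_mul_distrib, Finset.prod_const, Finset.card_range, hQdef]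
    rw [hrhs]
    apply Finset.prod_congr rfl
    intro j _
    have h5 : (1 - x) * (1 + q ^ (j + 1) * u) = (1 - x) + q ^ (j + 1) * (u * (1 - x)) := by ring
    rw [h5, hxu]
  have hD0 : (0:ℝ) < ∏ j ∈ Finset.range ((m + 1) - 1), (1 - x + q ^ (j + 1) * x) := by
    rw [hD]; positivity
  have hP : Pfin q u (m + 1) = Q * (1 + u) := by
    unfold Pfin
    rw [Finset.prod_range_succ' (fun j => 1 + q ^ j * u) m]
    rw [hQdef]
    norm_num
  have hP0 : 0 < Pfin q u (m + 1) := Pfin_pos hq0 hu _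
  have hxk : x ^ k = u ^ k * (1 - x) ^ k := by rw [← mul_pow, hxu]
  have h2 : (1 - x) ^ k * (1 - x) ^ (m + 1 - k) = (1 - x) ^ (m + 1) := by
    rw [← pow_add]; congr 1; omega
  have h3 : (1 - x) ^ (m + 1) = (1 - x) ^ m * (1 - x) := pow_succ _ _
  have h1ux : (1 - x) * (1 + u) = 1 := by
    have : (1 - x) * (1 + u) = (1 - x) + u * (1 - x) := by ring
    rw [this, hxu]; ring
  unfold lupasB
  unfold Chat
  rw [if_pos hk]
  rw [div_eq_div_iff hD0.ne' hP0.ne', hD, hP, hxk]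
  calc qBinom q (m + 1) k * q ^ (k * (k - 1) / 2) * (u ^ k * (1 - x) ^ k)
        * (1 - x) ^ (m + 1 - k) * (Q * (1 + u))
      = qBinom q (m + 1) k * q ^ (k * (k - 1) / 2) * u ^ k * Q
        * ((1 - x) ^ k * (1 - x) ^ (m + 1 - k)) * (1 + u) := by ring
    _ = qBinom q (m + 1) k * q ^ (k * (k - 1) / 2) * u ^ k * Q
        * (1 - x) ^ (m + 1) * (1 + u) := by rw [h2]
    _ = qBinom q (m + 1) k * q ^ (k * (k - 1) / 2) * u ^ k * Q
        * (1 - x) ^ m * ((1 - x) * (1 + u)) := by rw [h3]; ring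
    _ = qBinom q (m + 1) k * q ^ (k * (k - 1) / 2) * u ^ k * ((1 - x) ^ m * Q) := by
        rw [h1ux]; ring

end Translate

section MainAux

lemma sum_range_swap {g : ℕ → ℝ} {j n : ℕ} (hg : ∀ k, n < k → g k = 0) :
    ∑ k ∈ Finset.range (j + 1), g k
      = ∑ k ∈ Finset.range (n + 1), (if k ≤ j then g k else 0) := by
  have h1 : ∑ k ∈ Finset.range (j + 1), g k
      = ∑ k ∈ Finset.range (j + 1), (if k ≤ j then g k else 0) := by
    apply Finset.sum_congr rfl
    intro k hk
    rw [if_pos (Nat.le_of_lt_succ (Finset.mem_range.1 hk))]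
  have h2 : ∑ k ∈ Finset.range (j + 1), (if k ≤ j then g k else 0)
      = ∑ k ∈ Finset.range (max j n + 1), (if k ≤ j then g k else 0) := by
    apply Finset.sum_subset (Finset.range_subset_range.2 (by omega))
    intro k _ hk
    rw [if_neg (by simp at hk; omega)]
  have h3 : ∑ k ∈ Finset.range (n + 1), (if k ≤ j then g k else 0)
      = ∑ k ∈ Finset.range (max j n + 1), (if k ≤ j then g k else 0) := by
    apply Finset.sum_subset (Finset.range_subset_range.2 (by omega))
    intro k _ hk
    have hk' : n < k := by simp at hk; omega
    rw [hg k hk']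
    split <;> rfl
  rw [h1, h2, ← h3]

end MainAux

theorem lupasR_rate_omega1 (q : ℝ) (hq0 : 0 < q) (hq1 : q < 1) (f : ℝ → ℝ)
    (hf : ContinuousOn f (Set.Icc 0 1)) (n : ℕ) (hn : 1 ≤ n)
    (x : ℝ) (hx : x ∈ Set.Ico (0:ℝ) 1) :
    |lupasR q n f x - lupasRInf q f x| ≤ 2 / (1 - q) * (1 / (1 - x)) * omega1 f (q ^ n) := by

  obtain ⟨hx0, hx1⟩ := hx
  have h1x : 0 < 1 - x := by linarith
  have h1q : 0 < 1 - q := by linarith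
  set ε : ℝ := q ^ n with hεdef
  have hε : 0 < ε := pow_pos hq0 n
  have hεq : ε ≤ q := by
    rw [hεdef]
    calc q ^ n ≤ q ^ 1 := pow_le_pow_of_le_one hq0.le hq1.le hn
      _ = q := pow_one q
  have hε1 : ε < 1 := lt_of_le_of_lt hεq hq1
  have h1ε : 0 < 1 - ε := by linarith
  set u : ℝ := x / (1 - x) with hudef
  have hu : 0 ≤ u := div_nonneg hx0 h1x.le
  set v : ℝ := ε * u with hvdef
  have hv : 0 ≤ v := mul_nonneg hε.le hu
  set ω : ℝ := omega1 f ε with hωdef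
  have hω : 0 ≤ ω := omega1_nonneg hf hε.le
  obtain ⟨C, hC⟩ := isCompact_Icc.exists_bound_of_continuousOn hf
  have hC' : ∀ y ∈ Set.Icc (0:ℝ) 1, |f y| ≤ C := by
    intro y hy
    have := hC y hy
    rwa [Real.norm_eq_abs] at this
  have hln : ∀ j : ℕ, (1 - q ^ j) ∈ Set.Icc (0:ℝ) 1 := by
    intro j
    constructor
    · have := pow_le_one₀ hq0.le hq1.le (n := j); linarith
    · have := pow_pos hq0 j; linarith
  have hqn_pos : 0 < qInt q n := qInt_pos_s15 hq0 hn
  have htn : ∀ k, k ≤ n → qInt q k / qInt q n ∈ Set.Icc (0:ℝ) 1 := by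
    intro k hk
    constructor
    · exact div_nonneg (qInt_nonneg hq0.le k) hqn_pos.le
    · rw [div_le_one hqn_pos]; exact qInt_mono hq0.le hk
  have htl : ∀ k, k ≤ n → ∀ m : ℕ,
      |qInt q k / qInt q n - (1 - q ^ (m + k))| ≤ ε / (1 - ε) + (1 - q ^ m) := by
    intro k hk m
    have e1 := one_sub_mul_qInt (q := q) k
    have e2 := one_sub_mul_qInt (q := q) n
    rw [← hεdef] at e2
    have ht_eq : qInt q k / qInt q n = (1 - q ^ k) / (1 - ε) := by
      rw [div_eq_div_iff hqn_pos.ne' h1ε.ne']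
      apply mul_left_cancel₀ h1q.ne'
      linear_combination (1 - ε) * e1 - (1 - q ^ k) * e2
    have hqk1 : q ^ k ≤ 1 := pow_le_one₀ hq0.le hq1.le
    have hqk0 : 0 < q ^ k := pow_pos hq0 k
    have hqm1 : q ^ m ≤ 1 := pow_le_one₀ hq0.le hq1.le
    have hqm0 : 0 < q ^ m := pow_pos hq0 m
    have hmk : q ^ (m + k) = q ^ m * q ^ k := pow_add q m k
    have hd1 : qInt q k / qInt q n - (1 - q ^ k) = (1 - q ^ k) * (ε / (1 - ε)) := by
      rw [ht_eq]
      field_simp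
      ring
    have hd1b : (1 - q ^ k) * (ε / (1 - ε)) ≤ ε / (1 - ε) :=
      mul_le_of_le_one_left (div_nonneg hε.le h1ε.le) (by linarith)
    have hd1a : 0 ≤ (1 - q ^ k) * (ε / (1 - ε)) :=
      mul_nonneg (by linarith) (div_nonneg hε.le h1ε.le)
    have hd2a : 0 ≤ q ^ k * (1 - q ^ m) := mul_nonneg hqk0.le (by linarith)
    have hd2b : q ^ k * (1 - q ^ m) ≤ 1 - q ^ m :=
      mul_le_of_le_one_left (by linarith) hqk1
    have hsplit : qInt q k / qInt q n - (1 - q ^ (m + k))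
        = (1 - q ^ k) * (ε / (1 - ε)) - q ^ k * (1 - q ^ m) := by
      rw [← hd1, hmk]; ring
    rw [hsplit, abs_le]
    have h0 : 0 ≤ ε / (1 - ε) := div_nonneg hε.le h1ε.le
    constructor
    · linarith
    · linarith
  have hfb : ∀ k, k ≤ n → ∀ m : ℕ,
      |f (qInt q k / qInt q n) - f (1 - q ^ (m + k))|
        ≤ (1 + 1 / (1 - ε)) * ω + (if m = 0 then 0 else ω / ε) := by
    intro k hk m
    have h0 := omega1_chain hf hε (htn k hk) (hln (m + k))
    have hb := htl k hk m
    rcases eq_or_ne m 0 with rfl | hm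
    · rw [if_pos rfl, add_zero]
      simp only [pow_zero] at hb
      have hb' : |qInt q k / qInt q n - (1 - q ^ (0 + k))| ≤ ε / (1 - ε) := by linarith
      have h1 : |qInt q k / qInt q n - (1 - q ^ (0 + k))| / ε ≤ 1 / (1 - ε) := by
        rw [div_le_iff₀ hε]
        have he : 1 / (1 - ε) * ε = ε / (1 - ε) := by ring
        rw [he]
        exact hb'
      calc |f (qInt q k / qInt q n) - f (1 - q ^ (0 + k))|
          ≤ (1 + |qInt q k / qInt q n - (1 - q ^ (0 + k))| / ε) * ω := h0
        _ ≤ (1 + 1 / (1 - ε)) * ω := by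
            apply mul_le_mul_of_nonneg_right _ hω
            linarith
    · rw [if_neg hm]
      have h1 : |qInt q k / qInt q n - (1 - q ^ (m + k))| / ε ≤ 1 / (1 - ε) + 1 / ε := by
        rw [div_le_iff₀ hε]
        have hqm0 : 0 < q ^ m := pow_pos hq0 m
        have he : (1 / (1 - ε) + 1 / ε) * ε = ε / (1 - ε) + 1 := by
          field_simp
        rw [he]
        linarith
      calc |f (qInt q k / qInt q n) - f (1 - q ^ (m + k))|
          ≤ (1 + |qInt q k / qInt q n - (1 - q ^ (m + k))| / ε) * ω := h0
        _ ≤ (1 + (1 / (1 - ε) + 1 / ε)) * ω := by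
            apply mul_le_mul_of_nonneg_right _ hω
            linarith
        _ = (1 + 1 / (1 - ε)) * ω + ω / ε := by ring
  have hPf0 : 0 < Pfin q u n := Pfin_pos hq0 hu n
  set W : ℕ → ℝ := fun k => Chat q n k * u ^ k / Pfin q u n with hWdef
  have hWnn : ∀ k, 0 ≤ W k := fun k =>
    div_nonneg (mul_nonneg (Chat_nonneg hq0 hq1 n k) (pow_nonneg hu k)) hPf0.le
  have hW1 : ∑ k ∈ Finset.range (n + 1), W k = 1 := by
    rw [hWdef, ← Finset.sum_div, sum_Chat hq0 u n, div_self hPf0.ne']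
  have hRn : lupasR q n f x
      = ∑ k ∈ Finset.range (n + 1), f (qInt q k / qInt q n) * W k := by
    unfold lupasR
    apply Finset.sum_congr rfl
    intro k hk
    rw [lupasB_eq hq0 hq1 hx0 hx1 hn (Nat.le_of_lt_succ (Finset.mem_range.1 hk)), hWdef,
      ← hudef]
  have hβsum : Summable (Gf q v) := summable_Gf hq0 hq1 hv
  have hβ1 : ∑' m, Gf q v m = 1 := tsum_Gf hq0 hq1 hv
  have hβnn : ∀ m, 0 ≤ Gf q v m := Gf_nonneg hq0 hq1 hv
  have hRinf : lupasRInf q f x = ∑' j, f (1 - q ^ j) * Gf q u j := by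
    unfold lupasRInf lupasRInfLow
    rw [if_neg (not_lt.2 hq1.le), if_neg (ne_of_lt hx1)]
    apply tsum_congr
    intro j
    rw [lupasBInf_eq, ← hudef]
  have hv' : q ^ n * u = v := by rw [hvdef, hεdef]
  have hconv : ∀ j, Gf q u j
      = (∑ k ∈ Finset.range (j + 1), Chat q n k * u ^ k * Gf q v (j - k)) / Pfin q u n := by
    intro j
    have h := conv_id hq0 hq1 hu n j
    rw [hv'] at h
    rw [← h, mul_div_cancel_left₀ _ hPf0.ne']
  set FF : ℕ → ℕ → ℝ :=
    fun k j => if k ≤ j then f (1 - q ^ j) * (W k * Gf q v (j - k)) else 0 with hFFdef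
  have hWzero : ∀ k, n < k → W k = 0 := by
    intro k hk
    have hc : Chat q n k = 0 := by
      unfold Chat
      rw [if_neg (by omega)]
    rw [hWdef]
    simp only [hc, zero_mul, zero_div]
  have hstepA : ∀ j, f (1 - q ^ j) * Gf q u j = ∑ k ∈ Finset.range (n + 1), FF k j := by
    intro j
    rw [hconv j]
    have h1 : f (1 - q ^ j)
        * ((∑ k ∈ Finset.range (j + 1), Chat q n k * u ^ k * Gf q v (j - k)) / Pfin q u n)
        = ∑ k ∈ Finset.range (j + 1), f (1 - q ^ j) * (W k * Gf q v (j - k)) := by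
      rw [Finset.sum_div, Finset.mul_sum]
      apply Finset.sum_congr rfl
      intro k _
      rw [hWdef]
      ring
    rw [h1]
    exact sum_range_swap (fun k hk => by
      rw [hWzero k hk]
      ring)
  have hFksummable : ∀ k ∈ Finset.range (n + 1), Summable (FF k) := by
    intro k _
    apply (summable_nat_add_iff k).1
    have heq : ∀ m : ℕ, FF k (m + k) = f (1 - q ^ (m + k)) * (W k * Gf q v m) := by
      intro m
      rw [hFFdef]
      simp only []
      rw [if_pos (Nat.le_add_left k m), Nat.add_sub_cancel]
    apply Summable.of_norm_bounded
      ((hβsum.mul_left (C * |W k|)))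
    intro m
    rw [heq m, Real.norm_eq_abs, abs_mul, abs_mul, abs_of_nonneg (hβnn m)]
    have h1 : |f (1 - q ^ (m + k))| ≤ C := hC' _ (hln (m + k))
    have h2 : 0 ≤ |W k| * Gf q v m := mul_nonneg (abs_nonneg _) (hβnn m)
    calc |f (1 - q ^ (m + k))| * (|W k| * Gf q v m) ≤ C * (|W k| * Gf q v m) :=
        mul_le_mul_of_nonneg_right h1 h2
      _ = C * |W k| * Gf q v m := by ring
  have hswap2 : ∑' j, f (1 - q ^ j) * Gf q u j
      = ∑ k ∈ Finset.range (n + 1), ∑' j, FF k j := by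
    rw [tsum_congr hstepA, Summable.tsum_finsetSum hFksummable]
  have hfl_sum : ∀ k : ℕ, Summable (fun m => f (1 - q ^ (m + k)) * Gf q v m) := by
    intro k
    apply Summable.of_norm_bounded (hβsum.mul_left C)
    intro m
    rw [Real.norm_eq_abs, abs_mul, abs_of_nonneg (hβnn m)]
    exact mul_le_mul_of_nonneg_right (hC' _ (hln (m + k))) (hβnn m)
  have hstepD : ∀ k ∈ Finset.range (n + 1),
      (∑' j, FF k j) = W k * ∑' m, f (1 - q ^ (m + k)) * Gf q v m := by
    intro k hk
    have hFk := hFksummable k hk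
    have h1 := Summable.sum_add_tsum_nat_add k hFk
    have h2 : ∑ i ∈ Finset.range k, FF k i = 0 := by
      apply Finset.sum_eq_zero
      intro i hi
      rw [hFFdef]
      simp only []
      rw [if_neg (by have := Finset.mem_range.1 hi; omega)]
    have heq : ∀ m : ℕ, FF k (m + k) = W k * (f (1 - q ^ (m + k)) * Gf q v m) := by
      intro m
      rw [hFFdef]
      simp only []
      rw [if_pos (Nat.le_add_left k m), Nat.add_sub_cancel]
      ring
    rw [← h1, h2, zero_add, tsum_congr heq, tsum_mul_left]
  have hinner : ∀ k, k ≤ n →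
      |f (qInt q k / qInt q n) - ∑' m, f (1 - q ^ (m + k)) * Gf q v m|
        ≤ (1 + 1 / (1 - ε)) * ω + u / (1 - q) * ω := by
    intro k hk
    have hdiff_eq : f (qInt q k / qInt q n) - ∑' m, f (1 - q ^ (m + k)) * Gf q v m
        = ∑' m, (f (qInt q k / qInt q n) - f (1 - q ^ (m + k))) * Gf q v m := by
      have h2 : ∑' m, (f (qInt q k / qInt q n) - f (1 - q ^ (m + k))) * Gf q v m
          = f (qInt q k / qInt q n) - ∑' m, f (1 - q ^ (m + k)) * Gf q v m := by
        calc ∑' m, (f (qInt q k / qInt q n) - f (1 - q ^ (m + k))) * Gf q v m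
            = ∑' m, (f (qInt q k / qInt q n) * Gf q v m
                - f (1 - q ^ (m + k)) * Gf q v m) := by
              apply tsum_congr
              intro m
              ring
          _ = (∑' m, f (qInt q k / qInt q n) * Gf q v m)
              - ∑' m, f (1 - q ^ (m + k)) * Gf q v m :=
              Summable.tsum_sub (hβsum.mul_left _) (hfl_sum k)
          _ = f (qInt q k / qInt q n) - ∑' m, f (1 - q ^ (m + k)) * Gf q v m := by
              rw [tsum_mul_left, hβ1, mul_one]
      exact h2.symm
    rw [hdiff_eq]
    have hDsummable : Summable
        (fun m => (f (qInt q k / qInt q n) - f (1 - q ^ (m + k))) * Gf q v m) := by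
      apply ((hβsum.mul_left (f (qInt q k / qInt q n))).sub (hfl_sum k)).congr
      intro m
      ring
    have habs_sum : Summable
        (fun m => |(f (qInt q k / qInt q n) - f (1 - q ^ (m + k))) * Gf q v m|) :=
      hDsummable.abs
    have hItesum : Summable (fun m : ℕ => if m = 0 then 0 else Gf q v m) := by
      apply Summable.of_nonneg_of_le _ _ hβsum
      · intro m
        by_cases h : m = 0
        · simp [h]
        · simp [h, hβnn m]
      · intro m
        by_cases h : m = 0
        · simp [h, hβnn 0]
        · simp [h]
    have hIte : (∑' m : ℕ, if m = 0 then 0 else Gf q v m) = 1 - Gf q v 0 := by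
      have ha := Summable.tsum_eq_zero_add hItesum
      have hc : ∀ b : ℕ, (if b + 1 = 0 then (0:ℝ) else Gf q v (b + 1)) = Gf q v (b + 1) :=
        fun b => if_neg (Nat.succ_ne_zero b)
      rw [if_pos rfl, zero_add, tsum_congr hc] at ha
      have hb := Summable.tsum_eq_zero_add hβsum
      rw [hβ1] at hb
      rw [ha]
      linarith
    calc |∑' m, (f (qInt q k / qInt q n) - f (1 - q ^ (m + k))) * Gf q v m|
        ≤ ∑' m, |(f (qInt q k / qInt q n) - f (1 - q ^ (m + k))) * Gf q v m| := by
          have hns : Summable (fun m =>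
              ‖(f (qInt q k / qInt q n) - f (1 - q ^ (m + k))) * Gf q v m‖) := by
            simp only [Real.norm_eq_abs]
            exact habs_sum
          have := norm_tsum_le_tsum_norm hns
          simp only [Real.norm_eq_abs] at this
          exact this
      _ ≤ ∑' m, (((1 + 1 / (1 - ε)) * ω) * Gf q v m
            + (ω / ε) * (if m = 0 then 0 else Gf q v m)) := by
          apply Summable.tsum_le_tsum _ habs_sum
            ((hβsum.mul_left _).add (hItesum.mul_left _))
          intro m
          rw [abs_mul, abs_of_nonneg (hβnn m)]
          have h2 := hfb k hk m
          by_cases hm : m = 0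
          · rw [if_pos hm, mul_zero, add_zero]
            rw [if_pos hm, add_zero] at h2
            exact mul_le_mul_of_nonneg_right h2 (hβnn m)
          · rw [if_neg hm] at h2 ⊢
            calc |f (qInt q k / qInt q n) - f (1 - q ^ (m + k))| * Gf q v m
                ≤ ((1 + 1 / (1 - ε)) * ω + ω / ε) * Gf q v m :=
                  mul_le_mul_of_nonneg_right h2 (hβnn m)
              _ = ((1 + 1 / (1 - ε)) * ω) * Gf q v m + (ω / ε) * Gf q v m := by ring
      _ = ((1 + 1 / (1 - ε)) * ω) * (∑' m, Gf q v m)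
            + (ω / ε) * (∑' m : ℕ, if m = 0 then 0 else Gf q v m) := by
          rw [Summable.tsum_add (hβsum.mul_left _) (hItesum.mul_left _), tsum_mul_left,
            tsum_mul_left]
      _ = (1 + 1 / (1 - ε)) * ω + (ω / ε) * (1 - Gf q v 0) := by
          rw [hβ1, hIte]; ring
      _ ≤ (1 + 1 / (1 - ε)) * ω + u / (1 - q) * ω := by
          have h3 := one_sub_Gf_zero hq0 hq1 hv
          have h4 : 0 ≤ ω / ε := div_nonneg hω hε.le
          have h5 : (ω / ε) * (1 - Gf q v 0) ≤ (ω / ε) * (v / (1 - q)) :=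
            mul_le_mul_of_nonneg_left h3 h4
          have h6 : (ω / ε) * (v / (1 - q)) = u / (1 - q) * ω := by
            rw [hvdef]
            field_simp
          linarith
  have hdiff2 : lupasR q n f x - lupasRInf q f x
      = ∑ k ∈ Finset.range (n + 1),
          W k * (f (qInt q k / qInt q n) - ∑' m, f (1 - q ^ (m + k)) * Gf q v m) := by
    rw [hRn, hRinf, hswap2, Finset.sum_congr rfl hstepD, ← Finset.sum_sub_distrib]
    apply Finset.sum_congr rfl
    intro k _
    ring
  rw [hdiff2]
  have hfinal : (1 + 1 / (1 - ε)) * ω + u / (1 - q) * ω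
      ≤ 2 / (1 - q) * (1 / (1 - x)) * ω := by
    have hxeq : 1 / (1 - x) = 1 + u := by
      rw [hudef]
      field_simp
      ring
    rw [hxeq]
    have e1 : 1 / (1 - ε) ≤ 1 / (1 - q) := one_div_le_one_div_of_le h1q (by linarith)
    have e2 : 1 ≤ 1 / (1 - q) := by
      rw [le_div_iff₀ h1q]
      linarith
    have e3 : 0 ≤ u * (1 / (1 - q)) := mul_nonneg hu (by positivity)
    have hc : (1 + 1 / (1 - ε)) + u / (1 - q) ≤ 2 / (1 - q) * (1 + u) := by
      have e4 : u / (1 - q) = u * (1 / (1 - q)) := by ring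
      have e5 : 2 / (1 - q) * (1 + u) = 2 * (1 / (1 - q)) + 2 * (u * (1 / (1 - q))) := by
        ring
      rw [e4, e5]
      linarith
    calc (1 + 1 / (1 - ε)) * ω + u / (1 - q) * ω
        = ((1 + 1 / (1 - ε)) + u / (1 - q)) * ω := by ring
      _ ≤ (2 / (1 - q) * (1 + u)) * ω := mul_le_mul_of_nonneg_right hc hω
      _ = 2 / (1 - q) * (1 + u) * ω := by ring
  calc |∑ k ∈ Finset.range (n + 1),
        W k * (f (qInt q k / qInt q n) - ∑' m, f (1 - q ^ (m + k)) * Gf q v m)|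
      ≤ ∑ k ∈ Finset.range (n + 1),
        |W k * (f (qInt q k / qInt q n) - ∑' m, f (1 - q ^ (m + k)) * Gf q v m)| :=
        Finset.abs_sum_le_sum_abs _ _
    _ ≤ ∑ k ∈ Finset.range (n + 1),
        W k * ((1 + 1 / (1 - ε)) * ω + u / (1 - q) * ω) := by
        apply Finset.sum_le_sum
        intro k hk
        rw [abs_mul, abs_of_nonneg (hWnn k)]
        exact mul_le_mul_of_nonneg_left
          (hinner k (Nat.le_of_lt_succ (Finset.mem_range.1 hk))) (hWnn k)
    _ = (1 + 1 / (1 - ε)) * ω + u / (1 - q) * ω := by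
        rw [← Finset.sum_mul, hW1, one_mul]
    _ ≤ 2 / (1 - q) * (1 / (1 - x)) * ω := hfinal
end
end
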